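/- Let (Ω, 𝓐, P) be a probability space and W : [0,1] × Ω → ℝ a jointly measurable stochastic process such that W_s is integrable with E|W_s| ≤ s^{1/2} for every s ∈ [0,1]. Let (T_n) be a sequence of random variables taking values in [0,1] with T_n → 1 in probability. Then the random variables I_n := ∫_{T_n}^{1} s^{−1} W_s ds converge to 0 in probability as n → ∞. -/

import Mathlib

open Filter Set MeasureTheory

/-- Let `W : [0,1] × Ω → ℝ` be jointly measurable with each `W s`
integrable and `E|W s| ≤ s^(1/2)`, and let `T n` be random variables with values in
`[0,1]` converging to `1` in probability. Then `I n = ∫_(T n)^1 s⁻¹ W s ds` converges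
to `0` in probability. -/
theorem stmt_9 {Ω : Type*} [MeasurableSpace Ω] (P : Measure Ω) [IsProbabilityMeasure P]
    (W : ℝ → Ω → ℝ)
    (hWmeas : Measurable (fun p : ℝ × Ω => W p.1 p.2))
    (hWint : ∀ s ∈ Icc (0 : ℝ) 1, Integrable (W s) P)
    (hWbound : ∀ s ∈ Icc (0 : ℝ) 1, (∫ ω, |W s ω| ∂P) ≤ s ^ ((1 : ℝ) / 2))
    (T : ℕ → Ω → ℝ)
    (hTmeas : ∀ n, Measurable (T n))
    (hTrange : ∀ n ω, T n ω ∈ Icc (0 : ℝ) 1)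
    (hTconv : TendstoInMeasure P T atTop (fun _ => (1 : ℝ)))
    (I : ℕ → Ω → ℝ)
    (hI : ∀ n ω, I n ω = ∫ s in Ioc (T n ω) 1, s⁻¹ * W s ω) :
    TendstoInMeasure P I atTop (fun _ => (0 : ℝ)) := by
  refine tendstoInMeasure_iff_dist.mpr fun ε hε => ?_
  rw [ENNReal.tendsto_nhds_zero]
  intro δ hδ
  obtain ⟨r, hr0, hrδ⟩ : ∃ r : ℝ, 0 < r ∧ ENNReal.ofReal r ≤ δ / 2 := by
    rcases eq_or_ne (δ / 2) ⊤ with h | h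
    · exact ⟨1, one_pos, by simp [h]⟩
    · refine ⟨(δ / 2).toReal, ENNReal.toReal_pos (by simpa using hδ.ne') h, ?_⟩
      rw [ENNReal.ofReal_toReal h]
  set t : ℝ := max (1 / 2) (1 - ε * r / 2) with ht
  have ht0 : (0 : ℝ) < t := lt_of_lt_of_le (by norm_num) (le_max_left _ _)
  have htl : (1 / 2 : ℝ) ≤ t := le_max_left _ _
  have htr : 1 - ε * r / 2 ≤ t := le_max_right _ _
  have ht1 : t < 1 := by
    apply max_lt (by norm_num)
    nlinarith [mul_pos hε hr0]
  have hinv : t⁻¹ ≤ 2 := by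
    rw [inv_le_comm₀ ht0 (by norm_num)]
    linarith
  have htkey : t⁻¹ * (1 - t) ≤ ε * r := by
    have h1t : (0 : ℝ) ≤ 1 - t := by linarith
    have := mul_le_mul hinv (by linarith : 1 - t ≤ ε * r / 2) h1t (by norm_num)
    linarith
  set A : Ω → ENNReal := fun ω => ∫⁻ s in Ioc t 1, ENNReal.ofReal ‖s⁻¹ * W s ω‖ with hAdef
  have hA : Measurable A := by
    apply Measurable.lintegral_prod_left
    exact ((measurable_fst.inv.mul hWmeas).norm).ennreal_ofReal
  -- bound on ∫⁻ A
  have hAint : ∫⁻ ω, A ω ∂P ≤ ENNReal.ofReal (ε * r) := by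
    have hswap : ∫⁻ ω, A ω ∂P
        = ∫⁻ s in Ioc t 1, ∫⁻ ω, ENNReal.ofReal ‖s⁻¹ * W s ω‖ ∂P := by
      apply lintegral_lintegral_swap
      exact (((measurable_snd.inv.mul (hWmeas.comp measurable_swap)).norm).ennreal_ofReal).aemeasurable
    rw [hswap]
    have hin : ∀ s ∈ Ioc t 1, ∫⁻ ω, ENNReal.ofReal ‖s⁻¹ * W s ω‖ ∂P ≤ ENNReal.ofReal t⁻¹ := by
      intro s hs
      have hs0 : 0 < s := lt_trans ht0 hs.1
      have hsI : s ∈ Icc (0 : ℝ) 1 := ⟨hs0.le, hs.2⟩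
      have hWsm : Measurable (fun ω => ENNReal.ofReal |W s ω|) :=
        ((hWmeas.comp measurable_prodMk_left).abs).ennreal_ofReal
      have heq : ∀ ω, ENNReal.ofReal ‖s⁻¹ * W s ω‖ = ENNReal.ofReal s⁻¹ * ENNReal.ofReal |W s ω| := by
        intro ω
        rw [Real.norm_eq_abs, abs_mul, abs_of_pos (inv_pos.mpr hs0), ENNReal.ofReal_mul (inv_pos.mpr hs0).le]
      simp_rw [heq]
      rw [lintegral_const_mul _ hWsm]
      have hlint : ∫⁻ ω, ENNReal.ofReal |W s ω| ∂P = ENNReal.ofReal (∫ ω, |W s ω| ∂P) :=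
        (ofReal_integral_eq_lintegral_ofReal (hWint s hsI).abs
          (ae_of_all _ fun ω => abs_nonneg _)).symm
      rw [hlint, ← ENNReal.ofReal_mul (inv_pos.mpr hs0).le]
      apply ENNReal.ofReal_le_ofReal
      have h1 : ∫ ω, |W s ω| ∂P ≤ 1 := by
        refine (hWbound s hsI).trans ?_
        exact Real.rpow_le_one hs0.le hs.2 (by norm_num)
      have h2 : s⁻¹ ≤ t⁻¹ := inv_anti₀ ht0 hs.1.le
      have h3 : (0 : ℝ) ≤ ∫ ω, |W s ω| ∂P := integral_nonneg fun ω => abs_nonneg _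
      calc s⁻¹ * ∫ ω, |W s ω| ∂P ≤ t⁻¹ * 1 := mul_le_mul h2 h1 h3 (inv_pos.mpr ht0).le
        _ = t⁻¹ := mul_one _
    calc ∫⁻ s in Ioc t 1, ∫⁻ ω, ENNReal.ofReal ‖s⁻¹ * W s ω‖ ∂P
        ≤ ∫⁻ _ in Ioc t 1, ENNReal.ofReal t⁻¹ := setLIntegral_mono measurable_const hin
      _ = ENNReal.ofReal t⁻¹ * volume (Ioc t 1) := setLIntegral_const _ _
      _ = ENNReal.ofReal t⁻¹ * ENNReal.ofReal (1 - t) := by rw [Real.volume_Ioc]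
      _ = ENNReal.ofReal (t⁻¹ * (1 - t)) := (ENNReal.ofReal_mul (inv_pos.mpr ht0).le).symm
      _ ≤ ENNReal.ofReal (ε * r) := ENNReal.ofReal_le_ofReal htkey
  -- Markov
  have hMar : P {ω | ENNReal.ofReal ε ≤ A ω} ≤ ENNReal.ofReal r := by
    have h := (mul_meas_ge_le_lintegral₀ hA.aemeasurable (ENNReal.ofReal ε)).trans hAint
    rw [ENNReal.ofReal_mul hε.le] at h
    exact (ENNReal.mul_le_mul_iff_right (by simp [hε]) ENNReal.ofReal_ne_top).mp h
  -- event inclusion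
  have hsub : ∀ n, {ω | ε ≤ dist (I n ω) 0}
      ⊆ {ω | 1 - t ≤ dist (T n ω) 1} ∪ {ω | ENNReal.ofReal ε ≤ A ω} := by
    intro n ω hω
    by_contra hc
    rw [mem_union] at hc
    push_neg at hc
    obtain ⟨h1, h2⟩ := hc
    simp only [mem_setOf_eq, not_le] at h1 h2
    have hTt : t ≤ T n ω := by
      have := abs_lt.mp (by rwa [Real.dist_eq] at h1)
      linarith [this.1]
    have hAne : A ω ≠ ⊤ := h2.ne_top
    have step1 : |I n ω| ≤ (∫⁻ s in Ioc (T n ω) 1, ENNReal.ofReal ‖s⁻¹ * W s ω‖).toReal := by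
      rw [hI, ← Real.norm_eq_abs]
      exact norm_integral_le_lintegral_norm _
    have step2 : (∫⁻ s in Ioc (T n ω) 1, ENNReal.ofReal ‖s⁻¹ * W s ω‖) ≤ A ω :=
      lintegral_mono_set (fun x hx => ⟨lt_of_le_of_lt hTt hx.1, hx.2⟩)
    have step3 : (A ω).toReal < ε := (ENNReal.lt_ofReal_iff_toReal_lt hAne).mp h2
    have : |I n ω| < ε :=
      lt_of_le_of_lt (step1.trans (ENNReal.toReal_mono hAne step2)) step3
    simp only [mem_setOf_eq, Real.dist_eq, sub_zero] at hω
    linarith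
  have hδ2 : (0 : ENNReal) < δ / 2 := ENNReal.half_pos hδ.ne'
  have hT := tendstoInMeasure_iff_dist.mp hTconv (1 - t) (by linarith)
  have hTev : ∀ᶠ n in atTop, P {ω | 1 - t ≤ dist (T n ω) 1} ≤ δ / 2 :=
    (ENNReal.tendsto_nhds_zero.mp hT) (δ / 2) hδ2
  filter_upwards [hTev] with n hn
  calc P {ω | ε ≤ dist (I n ω) 0}
      ≤ P ({ω | 1 - t ≤ dist (T n ω) 1} ∪ {ω | ENNReal.ofReal ε ≤ A ω}) := measure_mono (hsub n)
    _ ≤ P {ω | 1 - t ≤ dist (T n ω) 1} + P {ω | ENNReal.ofReal ε ≤ A ω} := measure_union_le _ _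
    _ ≤ δ / 2 + δ / 2 := add_le_add hn (hMar.trans hrδ)
    _ = δ := ENNReal.add_halves δ
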